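/- Let H be a λ-intersecting k-uniform hypergraph with m ≥ 20(k−λ) edges that is not a sunflower, and suppose every vertex has degree at most 1.1(k−λ) or at least m − 1.1(k−λ) (call the latter heavy vertices). If H has fewer than λ heavy vertices, then m ≤ 2(k−λ)². -/
import Mathlib

open scoped Classical

set_option maxHeartbeats 1000000 in
/-- A non-sunflower λ-intersecting k-graph with m ≥ 20(k−λ) edges, whose degrees
separate into light and heavy, with fewer than λ heavy vertices, has m ≤ 2(k−λ)². -/
theorem few_heavy_vertices {V : Type*} [Fintype V] [DecidableEq V]
    (k lam m : ℕ) (hlam : 1 ≤ lam) (hlt : lam < k)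
    (H : Finset (Finset V)) (hm : H.card = m) (hm20 : 20 * (k - lam) ≤ m)
    (hunif : ∀ e ∈ H, e.card = k)
    (hint : ∀ e ∈ H, ∀ f ∈ H, e ≠ f → (e ∩ f).card = lam)
    (hnsun : ¬ ∃ C : Finset V, ∀ e ∈ H, ∀ f ∈ H, e ≠ f → e ∩ f = C)
    (hsep : ∀ v : V,
      ((H.filter (fun e => v ∈ e)).card : ℝ) ≤ 1.1 * ((k : ℝ) - lam) ∨
      (m : ℝ) - 1.1 * ((k : ℝ) - lam) ≤ ((H.filter (fun e => v ∈ e)).card : ℝ))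
    (hheavy : (Finset.univ.filter (fun v : V =>
      (m : ℝ) - 1.1 * ((k : ℝ) - lam) ≤ ((H.filter (fun e => v ∈ e)).card : ℝ))).card < lam) :
    m ≤ 2 * (k - lam) ^ 2 := by
  rcases Finset.eq_empty_or_nonempty H with hE | ⟨e, he⟩
  · have : m = 0 := by rw [← hm, hE]; simp
    omega
  set C := Finset.univ.filter (fun v : V =>
      (m : ℝ) - 1.1 * ((k : ℝ) - lam) ≤ ((H.filter (fun e => v ∈ e)).card : ℝ)) with hCdef
  set h := (e ∩ C).card with hhdef
  have hhc : h ≤ C.card := Finset.card_le_card Finset.inter_subset_right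
  have hhl : h + 1 ≤ lam := by omega
  set L := e \ C with hLdef
  have hLcard : L.card + h = k := by
    rw [hLdef, hhdef, Finset.card_sdiff_add_card_inter]; exact hunif e he
  -- double counting
  have hdc : ∑ f ∈ H.erase e, (L.filter (fun v => v ∈ f)).card
           = ∑ v ∈ L, ((H.erase e).filter (fun f => v ∈ f)).card := by
    simp only [Finset.card_filter]
    exact Finset.sum_comm
  -- lower bound per f
  have hlow : ∀ f ∈ H.erase e, lam ≤ (L.filter (fun v => v ∈ f)).card + h := by
    intro f hf
    have hfH := Finset.mem_of_mem_erase hf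
    have hne : e ≠ f := fun hq => (Finset.ne_of_mem_erase hf) hq.symm
    have hint' : (e ∩ f).card = lam := hint e he f hfH hne
    have hsub : (e ∩ f) ⊆ L.filter (fun v => v ∈ f) ∪ (e ∩ C) := by
      intro v hv
      simp only [Finset.mem_inter] at hv
      by_cases hvC : v ∈ C
      · exact Finset.mem_union_right _ (Finset.mem_inter.mpr ⟨hv.1, hvC⟩)
      · exact Finset.mem_union_left _
          (Finset.mem_filter.mpr ⟨Finset.mem_sdiff.mpr ⟨hv.1, hvC⟩, hv.2⟩)
    calc lam = (e ∩ f).card := hint'.symm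
      _ ≤ (L.filter (fun v => v ∈ f) ∪ (e ∩ C)).card := Finset.card_le_card hsub
      _ ≤ (L.filter (fun v => v ∈ f)).card + h := by
          rw [hhdef]; exact Finset.card_union_le _ _
  have hcard : (H.erase e).card = m - 1 := by rw [Finset.card_erase_of_mem he, hm]
  have hm1 : 1 ≤ m := by rw [← hm]; exact Finset.card_pos.mpr ⟨e, he⟩
  have hsumlow : (m - 1) * lam ≤ (∑ v ∈ L, ((H.erase e).filter (fun f => v ∈ f)).card)
      + (m - 1) * h := by
    rw [← hdc]
    calc (m - 1) * lam = ∑ _f ∈ H.erase e, lam := by rw [Finset.sum_const, hcard, smul_eq_mul]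
      _ ≤ ∑ f ∈ H.erase e, ((L.filter (fun v => v ∈ f)).card + h) :=
          Finset.sum_le_sum hlow
      _ = (∑ f ∈ H.erase e, (L.filter (fun v => v ∈ f)).card) + (m - 1) * h := by
          rw [Finset.sum_add_distrib, Finset.sum_const, hcard, smul_eq_mul]
  -- upper bound per light vertex, in ℝ
  have hup : ∀ v ∈ L, (((H.erase e).filter (fun f => v ∈ f)).card : ℝ)
      ≤ 1.1 * ((k : ℝ) - lam) - 1 := by
    intro v hv
    have hve : v ∈ e := (Finset.mem_sdiff.mp hv).1
    have hvC : v ∉ C := (Finset.mem_sdiff.mp hv).2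
    have hlight : ((H.filter (fun f => v ∈ f)).card : ℝ) ≤ 1.1 * ((k : ℝ) - lam) := by
      rcases hsep v with hl | hr
      · exact hl
      · exact absurd (Finset.mem_filter.mpr ⟨Finset.mem_univ v, hr⟩) hvC
    have heq : (H.erase e).filter (fun f => v ∈ f) = (H.filter (fun f => v ∈ f)).erase e := by
      ext f
      simp only [Finset.mem_filter, Finset.mem_erase]
      tauto
    have hmem : e ∈ H.filter (fun f => v ∈ f) := Finset.mem_filter.mpr ⟨he, hve⟩
    have hc1 : ((H.erase e).filter (fun f => v ∈ f)).card + 1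
        = (H.filter (fun f => v ∈ f)).card := by
      rw [heq, Finset.card_erase_of_mem hmem]
      have : 1 ≤ (H.filter (fun f => v ∈ f)).card := Finset.card_pos.mpr ⟨e, hmem⟩
      omega
    have hc2 : (((H.erase e).filter (fun f => v ∈ f)).card : ℝ) + 1
        = ((H.filter (fun f => v ∈ f)).card : ℝ) := by exact_mod_cast hc1
    linarith
  have hsumup : ((∑ v ∈ L, ((H.erase e).filter (fun f => v ∈ f)).card : ℕ) : ℝ)
      ≤ (L.card : ℝ) * (1.1 * ((k : ℝ) - lam) - 1) := by
    push_cast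
    calc (∑ v ∈ L, (((H.erase e).filter (fun f => v ∈ f)).card : ℝ))
        ≤ ∑ _v ∈ L, (1.1 * ((k : ℝ) - lam) - 1) := Finset.sum_le_sum hup
      _ = (L.card : ℝ) * (1.1 * ((k : ℝ) - lam) - 1) := by
          rw [Finset.sum_const, nsmul_eq_mul]
  -- now combine over ℝ
  set D : ℝ := (k : ℝ) - lam with hDdef
  have hD1 : (1 : ℝ) ≤ D := by
    have : (lam : ℝ) + 1 ≤ (k : ℝ) := by exact_mod_cast hlt
    rw [hDdef]; linarith
  have hslR : ((m : ℝ) - 1) * lam ≤ (L.card : ℝ) * (1.1 * D - 1) + ((m : ℝ) - 1) * h := by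
    have h1 : (((m - 1) * lam : ℕ) : ℝ) ≤
        ((∑ v ∈ L, ((H.erase e).filter (fun f => v ∈ f)).card : ℕ) : ℝ)
        + (((m - 1) * h : ℕ) : ℝ) := by exact_mod_cast hsumlow
    have h2 := hsumup
    push_cast [Nat.cast_sub hm1] at h1 h2
    rw [hDdef]
    linarith [h2]
  have hLk : (L.card : ℝ) + h = k := by exact_mod_cast hLcard
  have hhlam : (h : ℝ) + 1 ≤ lam := by exact_mod_cast hhl
  have hfin : (m : ℝ) ≤ 2 * D ^ 2 := by
    set t : ℝ := (lam : ℝ) - h with ht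
    have ht1 : 1 ≤ t := by rw [ht]; linarith
    have hLt : (L.card : ℝ) = D + t := by rw [ht, hDdef]; linarith
    have key : ((m : ℝ) - 1) * t ≤ (D + t) * (1.1 * D - 1) := by
      rw [ht]; rw [hLt] at hslR; nlinarith [hslR]
    have e2 : (D + t) * (1.1 * D - 1) ≤ (t * (D + 1)) * (1.1 * D - 1) := by
      apply mul_le_mul_of_nonneg_right
      · nlinarith
      · linarith
    have e4 : (m : ℝ) - 1 ≤ (D + 1) * (1.1 * D - 1) := by
      have := key.trans e2
      have ht0 : (0 : ℝ) < t := by linarith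
      nlinarith
    nlinarith [e4, hD1, mul_self_nonneg (D - 1)]
  have hcast : ((2 * (k - lam) ^ 2 : ℕ) : ℝ) = 2 * D ^ 2 := by
    push_cast [Nat.cast_sub hlt.le]
    rw [hDdef]
  exact_mod_cast hfin.trans hcast.symm.le
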